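/- Let M > 0 and let a : [0,∞) × ℝ → ℝ be continuous, 1-periodic in the space variable, with |a(τ,x)| ≤ M for all (τ,x). Let y : [0,∞) × ℝ → ℝ be continuous together with ∂_τy, ∂ₓy, ∂ₓₓy, be 1-periodic in the space variable and satisfy ∂_τy(τ,x) − ∂ₓₓy(τ,x) − a(τ,x)∂ₓy(τ,x) = 0 for all τ > 0 and x ∈ ℝ. If the initial profile x ↦ y(0,x) is not a constant function, then max_{x∈[0,1]} |y(τ,x)| < max_{x∈[0,1]} |y(0,x)| for every τ > 0. (Strict decrease of the sup-norm, by the strong maximum principle and the Hopf boundary point lemma.) -/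

import Mathlib

open Set Real

/-- Spatial partial derivative ∂ₓy(τ,x). -/
noncomputable def partialX (y : ℝ → ℝ → ℝ) (τ x : ℝ) : ℝ := deriv (y τ) x

/-- Temporal partial derivative ∂_τy(τ,x). -/
noncomputable def partialT (y : ℝ → ℝ → ℝ) (τ x : ℝ) : ℝ := deriv (fun σ => y σ x) τ

/-- Second spatial partial derivative ∂ₓₓy(τ,x). -/
noncomputable def partialXX (y : ℝ → ℝ → ℝ) : ℝ → ℝ → ℝ := partialX (partialX y)

open Filter Topology

lemma per_reduce {f : ℝ → ℝ} (hper : ∀ x, f (x + 1) = f x) (A x : ℝ) :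
    ∃ x' ∈ Icc A (A + 1), f x' = f x := by
  have hp : Function.Periodic f 1 := hper
  refine ⟨x - ⌊x - A⌋, ?_, ?_⟩
  · have h1 : (0:ℝ) ≤ Int.fract (x - A) := Int.fract_nonneg _
    have h2 : Int.fract (x - A) < 1 := Int.fract_lt_one _
    have h3 : Int.fract (x - A) = x - ⌊x - A⌋ - A := by
      rw [Int.fract]; ring
    constructor <;> nlinarith
  · simpa using hp.sub_zsmul_eq (x := x) ⌊x - A⌋

lemma deriv_nonneg_of_maxOn_left {g : ℝ → ℝ} {s t0 d : ℝ} (hs : s < t0)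
    (hmax : ∀ σ ∈ Icc s t0, g σ ≤ g t0) (hd : HasDerivAt g d t0) : 0 ≤ d := by
  have h := hasDerivAt_iff_tendsto_slope.1 hd
  have h' : Tendsto (slope g t0) (𝓝[<] t0) (𝓝 d) :=
    h.mono_left (nhdsWithin_mono _ (fun z hz => ne_of_lt hz))
  have hne : (𝓝[<] t0).NeBot := nhdsLT_neBot t0
  refine ge_of_tendsto h' ?_
  filter_upwards [Ioo_mem_nhdsLT_of_mem (show t0 ∈ Ioc s t0 from ⟨hs, le_refl _⟩)] with σ hσ
  have h1 : g σ - g t0 ≤ 0 := sub_nonpos.2 (hmax σ ⟨hσ.1.le, hσ.2.le⟩)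
  have h2 : σ - t0 < 0 := sub_neg.2 hσ.2
  rw [slope_def_field]
  rw [div_nonneg_iff]
  right
  exact ⟨h1, h2.le⟩


lemma second_deriv_nonpos_of_isLocalMax {f f' : ℝ → ℝ} {x0 c : ℝ}
    (hmax : IsLocalMax f x0)
    (hder : ∀ x, HasDerivAt f (f' x) x)
    (h2 : HasDerivAt f' c x0) : c ≤ 0 := by
  by_contra hc
  push_neg at hc
  have hf'0 : f' x0 = 0 := by
    have := hmax.deriv_eq_zero
    rwa [(hder x0).deriv] at this
  -- f' > 0 on a right neighborhood
  have hslope := hasDerivAt_iff_tendsto_slope.1 h2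
  have h' : Tendsto (slope f' x0) (𝓝[>] x0) (𝓝 c) :=
    hslope.mono_left (nhdsWithin_mono _ (fun z hz => ne_of_gt hz))
  have hev : ∀ᶠ x in 𝓝[>] x0, 0 < slope f' x0 x :=
    h'.eventually (eventually_gt_nhds hc)
  have hev2 : ∀ᶠ x in 𝓝[>] x0, 0 < f' x := by
    filter_upwards [hev, self_mem_nhdsWithin] with x hx hx'
    have hxx : 0 < x - x0 := sub_pos.2 hx'
    rw [slope_def_field, hf'0, sub_zero] at hx
    have := mul_pos hx hxx
    rwa [div_mul_cancel₀] at this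
    exact ne_of_gt hxx
  have hev3 : ∀ᶠ x in 𝓝[>] x0, f x ≤ f x0 :=
    hmax.filter_mono nhdsWithin_le_nhds
  -- extract an interval
  obtain ⟨b, hb, hIoo⟩ := (nhdsGT_basis x0).eventually_iff.1 (hev2.and hev3)
  set b' := (x0 + b)/2 with hb'
  have hb'1 : x0 < b' := by simp [hb']; linarith
  have hb'2 : b' < b := by simp [hb']; linarith
  have hmono : StrictMonoOn f (Icc x0 b') := by
    apply strictMonoOn_of_deriv_pos (convex_Icc _ _)
    · exact fun x _ => ((hder x).differentiableAt).continuousAt.continuousWithinAt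
    · intro x hx
      rw [interior_Icc] at hx
      rw [(hder x).deriv]
      exact (hIoo ⟨hx.1, hx.2.trans hb'2⟩).1
  have h1 : f x0 < f b' := hmono ⟨le_refl _, hb'1.le⟩ ⟨hb'1.le, le_refl _⟩ hb'1
  have h2 : f b' ≤ f x0 := (hIoo ⟨hb'1, hb'2⟩).2
  linarith


lemma per_mp (aa z : ℝ → ℝ → ℝ) (t0 t1 : ℝ)
    (ht : t0 < t1)
    (hzc : ContinuousOn (Function.uncurry z) (Icc t0 t1 ×ˢ (univ : Set ℝ)))
    (hper : ∀ τ x, z τ (x + 1) = z τ x)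
    (hder : ∀ τ, t0 < τ → τ ≤ t1 → ∃ f' : ℝ → ℝ,
        (∀ x, HasDerivAt (z τ) (f' x) x) ∧
        ∀ x, ∃ zt zxx : ℝ,
          HasDerivAt (fun σ => z σ x) zt τ ∧ HasDerivAt f' zxx x ∧
          zt ≤ zxx + aa τ x * f' x)
    (hini : ∀ x, z t0 x ≤ 0) :
    ∀ τ ∈ Icc t0 t1, ∀ x, z τ x ≤ 0 := by
  suffices H : ∀ ε > (0:ℝ), ∀ τ ∈ Icc t0 t1, ∀ x, z τ x ≤ ε * (t1 - t0) by
    intro τ hτ x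
    refine le_of_forall_pos_le_add ?_
    intro ε' hε'
    have hden : (0:ℝ) < t1 - t0 := by linarith
    have h1 := H (ε' / (t1 - t0)) (by positivity) τ hτ x
    rw [div_mul_cancel₀] at h1
    · linarith
    · linarith
  intro ε hε
  set D : Set (ℝ × ℝ) := Icc t0 t1 ×ˢ Icc (0:ℝ) 1 with hD
  have hcpt : IsCompact D := isCompact_Icc.prod isCompact_Icc
  have hne : D.Nonempty := ⟨(t0, 0), ⟨⟨le_refl _, ht.le⟩, by norm_num⟩⟩
  set F : ℝ × ℝ → ℝ := fun p => z p.1 p.2 - ε * (p.1 - t0) with hF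
  have hFc : ContinuousOn F D := by
    apply ContinuousOn.sub
    · exact hzc.mono (fun p hp => ⟨hp.1, mem_univ _⟩)
    · exact (continuous_const.mul (continuous_fst.sub continuous_const)).continuousOn
  obtain ⟨p0, hp0D, hp0max⟩ := hcpt.exists_isMaxOn hne hFc
  rw [isMaxOn_iff] at hp0max
  -- reduce the goal using periodicity
  have key : ∀ τ ∈ Icc t0 t1, ∀ x, z τ x ≤ F p0 + ε * (t1 - t0) := by
    intro τ hτ x
    obtain ⟨x', hx', hzx'⟩ := per_reduce (hper τ) 0 x
    rw [zero_add] at hx'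
    have h1 := hp0max (τ, x') ⟨hτ, hx'⟩
    have h2 : ε * (τ - t0) ≤ ε * (t1 - t0) := by
      apply mul_le_mul_of_nonneg_left _ hε.le
      linarith [hτ.2]
    have h3 : F p0 = z p0.1 p0.2 - ε * (p0.1 - t0) := rfl
    simp only [hF] at h1
    rw [← hzx']
    linarith
  by_cases hle : F p0 ≤ 0
  · intro τ hτ x
    have := key τ hτ x
    linarith
  push_neg at hle
  exfalso
  obtain ⟨hτ0D, hx0D⟩ := hp0D
  set τ0 := p0.1 with hτ0
  set x0 := p0.2 with hx0
  have hτ0gt : t0 < τ0 := by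
    rcases lt_or_eq_of_le hτ0D.1 with h | h
    · exact h
    · exfalso
      have e : F p0 = z τ0 x0 - ε * (τ0 - t0) := rfl
      rw [e, ← h] at hle
      simp at hle
      linarith [hini x0]
  obtain ⟨f', hf', hpt⟩ := hder τ0 hτ0gt hτ0D.2
  -- spatial global max
  have hsp : ∀ x, z τ0 x ≤ z τ0 x0 := by
    intro x
    obtain ⟨x', hx', hzx'⟩ := per_reduce (hper τ0) 0 x
    rw [zero_add] at hx'
    have h1 := hp0max (τ0, x') ⟨hτ0D, hx'⟩
    have h3 : F p0 = z τ0 x0 - ε * (τ0 - t0) := rfl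
    simp only [hF] at h1
    rw [← hzx']
    simp only [hτ0] at h3 ⊢
    linarith [h1]
  have hlm : IsLocalMax (z τ0) x0 := Filter.Eventually.of_forall hsp
  have hfx0 : f' x0 = 0 := by
    have h1 := hlm.deriv_eq_zero
    rwa [(hf' x0).deriv] at h1
  obtain ⟨zt, zxx, hzt, hzxx, hineq⟩ := hpt x0
  have hzxx0 : zxx ≤ 0 := second_deriv_nonpos_of_isLocalMax hlm hf' hzxx
  -- time derivative
  have hg : HasDerivAt (fun σ => z σ x0 - ε * (σ - t0)) (zt - ε * 1) τ0 :=
    hzt.sub (((hasDerivAt_id τ0).sub_const t0).const_mul ε)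
  have hgmax : ∀ σ ∈ Icc t0 τ0, (fun σ => z σ x0 - ε * (σ - t0)) σ
      ≤ (fun σ => z σ x0 - ε * (σ - t0)) τ0 := by
    intro σ hσ
    have h1 := hp0max (σ, x0) ⟨⟨hσ.1, hσ.2.trans hτ0D.2⟩, hx0D⟩
    have h3 : F p0 = z τ0 x0 - ε * (τ0 - t0) := rfl
    simp only [hF] at h1
    simp only []
    simp only [hτ0] at h3 ⊢
    linarith [h1]
  have hd := deriv_nonneg_of_maxOn_left hτ0gt hgmax hg
  rw [hfx0, mul_zero, add_zero] at hineq
  linarith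


lemma rect_mp (aa z : ℝ → ℝ → ℝ) (t1 A B : ℝ)
    (ht1 : 0 < t1) (hAB : A < B)
    (hzc : ContinuousOn (Function.uncurry z) (Icc 0 t1 ×ˢ Icc A B))
    (hder : ∀ τ, 0 < τ → τ ≤ t1 → ∃ f' : ℝ → ℝ,
        (∀ x, HasDerivAt (z τ) (f' x) x) ∧
        ∀ x, ∃ zt zxx : ℝ,
          HasDerivAt (fun σ => z σ x) zt τ ∧ HasDerivAt f' zxx x ∧
          zt ≤ zxx + aa τ x * f' x)
    (hini : ∀ x ∈ Icc A B, z 0 x ≤ 0)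
    (hlat : ∀ τ ∈ Icc 0 t1, z τ A ≤ 0 ∧ z τ B ≤ 0) :
    ∀ τ ∈ Icc 0 t1, ∀ x ∈ Icc A B, z τ x ≤ 0 := by
  suffices H : ∀ ε > (0:ℝ), ∀ τ ∈ Icc 0 t1, ∀ x ∈ Icc A B, z τ x ≤ ε * t1 by
    intro τ hτ x hx
    refine le_of_forall_pos_le_add ?_
    intro ε' hε'
    have h1 := H (ε' / t1) (by positivity) τ hτ x hx
    rw [div_mul_cancel₀] at h1
    · linarith
    · linarith
  intro ε hε
  set D : Set (ℝ × ℝ) := Icc 0 t1 ×ˢ Icc A B with hD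
  have hcpt : IsCompact D := isCompact_Icc.prod isCompact_Icc
  have hne : D.Nonempty := ⟨(0, A), ⟨⟨le_refl _, ht1.le⟩, ⟨le_refl _, hAB.le⟩⟩⟩
  set F : ℝ × ℝ → ℝ := fun p => z p.1 p.2 - ε * p.1 with hF
  have hFc : ContinuousOn F D := by
    apply ContinuousOn.sub
    · exact hzc
    · exact (continuous_const.mul continuous_fst).continuousOn
  obtain ⟨p0, hp0D, hp0max⟩ := hcpt.exists_isMaxOn hne hFc
  rw [isMaxOn_iff] at hp0max
  by_cases hle : F p0 ≤ 0
  · intro τ hτ x hx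
    have h1 := hp0max (τ, x) ⟨hτ, hx⟩
    have h3 : F p0 = z p0.1 p0.2 - ε * p0.1 := rfl
    simp only [hF] at h1
    have h2 : ε * τ ≤ ε * t1 := mul_le_mul_of_nonneg_left hτ.2 hε.le
    linarith
  push_neg at hle
  exfalso
  obtain ⟨hτ0D, hx0D⟩ := hp0D
  set τ0 := p0.1 with hτ0
  set x0 := p0.2 with hx0
  have e : F p0 = z τ0 x0 - ε * τ0 := rfl
  have hτ0gt : 0 < τ0 := by
    rcases lt_or_eq_of_le hτ0D.1 with h | h
    · exact h
    · exfalso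
      rw [e, ← h] at hle
      simp at hle
      linarith [hini x0 hx0D]
  have hεt : 0 < ε * τ0 := mul_pos hε hτ0gt
  have hxA : A < x0 := by
    rcases lt_or_eq_of_le hx0D.1 with h | h
    · exact h
    · exfalso
      rw [e, ← h] at hle
      linarith [(hlat τ0 hτ0D).1]
  have hxB : x0 < B := by
    rcases lt_or_eq_of_le hx0D.2 with h | h
    · exact h
    · exfalso
      rw [e, h] at hle
      linarith [(hlat τ0 hτ0D).2]
  obtain ⟨f', hf', hpt⟩ := hder τ0 hτ0gt hτ0D.2
  have hlm : IsLocalMax (z τ0) x0 := by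
    filter_upwards [Icc_mem_nhds hxA hxB] with x hx
    have h1 := hp0max (τ0, x) ⟨hτ0D, hx⟩
    simp only [hF] at h1
    simp only [hτ0] at e ⊢
    linarith [h1]
  have hfx0 : f' x0 = 0 := by
    have h1 := hlm.deriv_eq_zero
    rwa [(hf' x0).deriv] at h1
  obtain ⟨zt, zxx, hzt, hzxx, hineq⟩ := hpt x0
  have hzxx0 : zxx ≤ 0 := second_deriv_nonpos_of_isLocalMax hlm hf' hzxx
  have hg : HasDerivAt (fun σ => z σ x0 - ε * σ) (zt - ε * 1) τ0 :=
    hzt.sub ((hasDerivAt_id τ0).const_mul ε)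
  have hgmax : ∀ σ ∈ Icc 0 τ0, (fun σ => z σ x0 - ε * σ) σ
      ≤ (fun σ => z σ x0 - ε * σ) τ0 := by
    intro σ hσ
    have h1 := hp0max (σ, x0) ⟨⟨hσ.1, hσ.2.trans hτ0D.2⟩, hx0D⟩
    simp only [hF] at h1
    simp only [hτ0] at e ⊢
    linarith [h1]
  have hd := deriv_nonneg_of_maxOn_left hτ0gt hgmax hg
  rw [hfx0, mul_zero, add_zero] at hineq
  linarith


noncomputable def barE (s K x1 : ℝ) (τ x : ℝ) : ℝ :=
  (Real.log s - Real.log (τ + s))/2 - (x - x1)^2/(2*(τ+s)) - K*τ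

noncomputable def barF (s K x1 : ℝ) (τ x : ℝ) : ℝ := Real.exp (barE s K x1 τ x)

lemma barF_pos (s K x1 τ x : ℝ) : 0 < barF s K x1 τ x := Real.exp_pos _

lemma bracket_nonpos (M s t r av : ℝ) (hs : 0 < s) (hst : s ≤ t) (ht : 0 < t)
    (h1 : av*r ≤ M*|r|) (hM : 0 ≤ M) :
    1/(2*t) - r^2/(2*t^2) - (1/(2*s) + M^2/2) + av*r/t ≤ 0 := by
  have h5 : t ≤ t^2/s := by
    rw [le_div_iff₀ hs]
    nlinarith
  have hnum : t - r^2 + 2*t*(av*r) ≤ t^2/s + M^2*t^2 := by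
    have ha : 2*t*(av*r) ≤ 2*t*(M*|r|) :=
      mul_le_mul_of_nonneg_left h1 (by linarith : (0:ℝ) ≤ 2*t)
    have hbnd : 2*t*(M*|r|) ≤ r^2 + M^2*t^2 := by
      nlinarith [sq_nonneg (|r| - M*t), sq_abs r]
    linarith
  have hKe : 2*t^2*(1/(2*s) + M^2/2) = t^2/s + M^2*t^2 := by
    field_simp
  have hb2 : (1/(2*t) - r^2/(2*t^2) - (1/(2*s) + M^2/2) + av*r/t) * (2*t^2)
      = t - r^2 - 2*t^2*(1/(2*s) + M^2/2) + 2*t*(av*r) := by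
    field_simp
  have h6 : (1/(2*t) - r^2/(2*t^2) - (1/(2*s) + M^2/2) + av*r/t) * (2*t^2) ≤ 0 := by
    rw [hb2, hKe]; linarith
  have h7 : (0:ℝ) < 2*t^2 := by positivity
  have h8 : (1/(2*t) - r^2/(2*t^2) - (1/(2*s) + M^2/2) + av*r/t) * (2*t^2) ≤ 0 * (2*t^2) := by
    rw [zero_mul]; exact h6
  exact le_of_mul_le_mul_right h8 h7

set_option maxHeartbeats 1000000 in
lemma bar_subsol (M s x1 : ℝ) (hs : 0 < s)
    (τ x av : ℝ) (hτ : 0 ≤ τ) (hav : |av| ≤ M) :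
    (-(1/(2*(τ+s))) + (x-x1)^2/(2*(τ+s)^2) - (1/(2*s) + M^2/2)) * barF s (1/(2*s) + M^2/2) x1 τ x
      - ((x-x1)^2/(τ+s)^2 - 1/(τ+s)) * barF s (1/(2*s) + M^2/2) x1 τ x
      - av * (-((x - x1)/(τ+s)) * barF s (1/(2*s) + M^2/2) x1 τ x) ≤ 0 := by
  set K := 1/(2*s) + M^2/2 with hK
  set t := τ + s with htdef
  set r := x - x1 with hrdef
  set b := barF s K x1 τ x with hbdef
  have hb : 0 < b := barF_pos _ _ _ _ _
  have ht : 0 < t := by simp [htdef]; linarith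
  have hst : s ≤ t := by simp [htdef]; linarith
  have hM : 0 ≤ M := le_trans (abs_nonneg _) hav
  have hfactor :
      (-(1/(2*t)) + r^2/(2*t^2) - K) * b - (r^2/t^2 - 1/t) * b - av * (-(r/t) * b)
        = (1/(2*t) - r^2/(2*t^2) - K + av*r/t) * b := by
    field_simp
    ring
  rw [hfactor]
  apply mul_nonpos_of_nonpos_of_nonneg _ hb.le
  have h1 : av * r ≤ M * |r| := by
    calc av * r ≤ |av * r| := le_abs_self _
    _ = |av| * |r| := abs_mul _ _
    _ ≤ M * |r| := mul_le_mul_of_nonneg_right hav (abs_nonneg _)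
  exact bracket_nonpos M s t r av hs hst ht h1 hM

lemma barF_contOn (s K x1 : ℝ) (hs : 0 < s) :
    ContinuousOn (Function.uncurry (barF s K x1)) (Ici (0:ℝ) ×ˢ (univ : Set ℝ)) := by
  intro p hp
  apply ContinuousAt.continuousWithinAt
  have hne : p.1 + s ≠ 0 := by
    have : (0:ℝ) ≤ p.1 := hp.1
    positivity
  apply ContinuousAt.rexp
  unfold barE
  apply ContinuousAt.sub
  apply ContinuousAt.sub
  · apply ContinuousAt.div_const
    apply ContinuousAt.sub continuousAt_const
    exact ContinuousAt.log ((continuous_fst.add continuous_const).continuousAt) hne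
  · apply ContinuousAt.div
    · exact (((continuous_snd.sub continuous_const).pow 2)).continuousAt
    · exact (continuous_const.mul (continuous_fst.add continuous_const)).continuousAt
    · have hpos : (0:ℝ) < p.1 + s := by
        have h0 : (0:ℝ) ≤ p.1 := hp.1
        linarith
      positivity
  · exact (continuous_const.mul continuous_fst).continuousAt


lemma barE_hasDerivAt_x (s K x1 τ x : ℝ) :
    HasDerivAt (fun x => barE s K x1 τ x) (-((x - x1)/(τ+s))) x := by
  unfold barE
  have h2 : HasDerivAt (fun x : ℝ => (x - x1)^2) (2*(x-x1)) x := by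
    have := ((hasDerivAt_id x).sub_const x1).fun_pow 2
    simpa [mul_comm] using this
  have h := ((hasDerivAt_const x ((Real.log s - Real.log (τ + s))/2)).fun_sub
    (h2.div_const (2*(τ+s)))).sub_const (K*τ)
  refine h.congr_deriv ?_
  rw [zero_sub]
  congr 1
  rw [mul_div_mul_left _ _ (by norm_num : (2:ℝ) ≠ 0)]

lemma barF_hasDerivAt_x (s K x1 τ x : ℝ) :
    HasDerivAt (barF s K x1 τ) (-((x - x1)/(τ+s)) * barF s K x1 τ x) x := by
  have h := (barE_hasDerivAt_x s K x1 τ x).exp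
  unfold barF
  simpa [mul_comm] using h

lemma barX_hasDerivAt (s K x1 τ x : ℝ) (ht : 0 < τ + s) :
    HasDerivAt (fun x => -((x - x1)/(τ+s)) * barF s K x1 τ x)
      (((x-x1)^2/(τ+s)^2 - 1/(τ+s)) * barF s K x1 τ x) x := by
  have h1 : HasDerivAt (fun x : ℝ => -((x - x1)/(τ+s))) (-(1/(τ+s))) x := by
    have := ((hasDerivAt_id x).sub_const x1).div_const (τ+s)
    have h2 := this.fun_neg
    simpa using h2
  have h := h1.mul (barF_hasDerivAt_x s K x1 τ x)
  refine h.congr_deriv ?_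
  unfold barF
  have hne : τ + s ≠ 0 := ne_of_gt ht
  field_simp
  ring

lemma barF_hasDerivAt_t (s K x1 : ℝ) (τ x : ℝ) (ht : 0 < τ + s) :
    HasDerivAt (fun σ => barF s K x1 σ x)
      ((-(1/(2*(τ+s))) + (x-x1)^2/(2*(τ+s)^2) - K) * barF s K x1 τ x) τ := by
  have hne : τ + s ≠ 0 := ne_of_gt ht
  have hadd : HasDerivAt (fun σ : ℝ => σ + s) 1 τ := (hasDerivAt_id τ).add_const s
  have hlog : HasDerivAt (fun σ : ℝ => Real.log (σ + s)) ((τ+s)⁻¹) τ := by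
    have := (Real.hasDerivAt_log hne).comp τ hadd
    simpa [Function.comp_def] using this
  have hinv : HasDerivAt (fun σ : ℝ => (σ + s)⁻¹) (-((τ+s)^2)⁻¹) τ := by
    have := (hasDerivAt_inv hne).comp τ hadd
    simpa [Function.comp_def] using this
  have hE : HasDerivAt (fun σ => barE s K x1 σ x)
      (-(1/(2*(τ+s))) + (x-x1)^2/(2*(τ+s)^2) - K) τ := by
    unfold barE
    have h1 : HasDerivAt (fun σ : ℝ => (Real.log s - Real.log (σ + s))/2)
        (-(τ+s)⁻¹/2) τ := by
      have := ((hasDerivAt_const τ (Real.log s)).sub hlog).div_const 2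
      simpa using this
    have h2 : HasDerivAt (fun σ : ℝ => (x - x1)^2/(2*(σ+s)))
        ((x-x1)^2/2 * (-((τ+s)^2)⁻¹)) τ := by
      have h3 := hinv.const_mul ((x - x1)^2/2)
      have he : ∀ σ : ℝ, (x - x1)^2/(2*(σ+s)) = (x-x1)^2/2 * (σ+s)⁻¹ := fun σ => by
        rw [div_eq_mul_inv, mul_inv, div_eq_mul_inv]; ring
      simp only [he]
      exact h3
    have h4 : HasDerivAt (fun σ : ℝ => K * σ) K τ := by
      simpa using (hasDerivAt_id τ).const_mul K
    have := (h1.fun_sub h2).fun_sub h4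
    refine this.congr_deriv ?_
    field_simp
    try ring
  have h := hE.exp
  simpa [barF, mul_comm] using h


/-- comparison with a constant from a given start time, for the solution `y` -/
lemma per_bound_step (a y : ℝ → ℝ → ℝ)
    (hyc : ContinuousOn (Function.uncurry y) (Ici 0 ×ˢ univ))
    (hyt : ∀ τ x : ℝ, 0 < τ → DifferentiableAt ℝ (fun σ => y σ x) τ)
    (hyx : ∀ τ x : ℝ, 0 < τ → DifferentiableAt ℝ (y τ) x)
    (hyxx : ∀ τ x : ℝ, 0 < τ → DifferentiableAt ℝ (partialX y τ) x)
    (hyper : ∀ τ x : ℝ, y τ (x + 1) = y τ x)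
    (hyeq : ∀ τ x : ℝ, 0 < τ →
      partialT y τ x - partialXX y τ x - a τ x * partialX y τ x = 0)
    (t0 t1 c : ℝ) (ht0 : 0 ≤ t0) (ht : t0 < t1)
    (hini : ∀ x, y t0 x ≤ c) :
    ∀ τ ∈ Icc t0 t1, ∀ x, y τ x ≤ c := by
  have H := per_mp a (fun τ x => y τ x - c) t0 t1 ht ?_ ?_ ?_ ?_
  · intro τ hτ x
    have h2 : y τ x - c ≤ 0 := H τ hτ x
    linarith
  · apply ContinuousOn.sub
    · exact hyc.mono (fun p hp => ⟨le_trans ht0 hp.1.1, mem_univ _⟩)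
    · exact continuousOn_const
  · intro τ x
    simp [hyper τ x]
  · intro τ hτ hτ1
    have hτ0 : 0 < τ := lt_of_le_of_lt ht0 hτ
    refine ⟨partialX y τ, ?_, ?_⟩
    · intro x
      exact ((hyx τ x hτ0).hasDerivAt).sub_const c
    · intro x
      refine ⟨partialT y τ x, partialXX y τ x, ?_, ?_, ?_⟩
      · exact ((hyt τ x hτ0).hasDerivAt).sub_const c
      · exact (hyxx τ x hτ0).hasDerivAt
      · have := hyeq τ x hτ0
        linarith
  · intro x
    show y t0 x - c ≤ 0
    linarith [hini x]


set_option maxHeartbeats 2000000 in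
lemma barrier_step (M : ℝ) (a y : ℝ → ℝ → ℝ)
    (haM : ∀ τ x : ℝ, 0 ≤ τ → |a τ x| ≤ M)
    (hyc : ContinuousOn (Function.uncurry y) (Ici 0 ×ˢ univ))
    (hyt : ∀ τ x : ℝ, 0 < τ → DifferentiableAt ℝ (fun σ => y σ x) τ)
    (hyx : ∀ τ x : ℝ, 0 < τ → DifferentiableAt ℝ (y τ) x)
    (hyxx : ∀ τ x : ℝ, 0 < τ → DifferentiableAt ℝ (partialX y τ) x)
    (hyper : ∀ τ x : ℝ, y τ (x + 1) = y τ x)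
    (hyeq : ∀ τ x : ℝ, 0 < τ →
      partialT y τ x - partialXX y τ x - a τ x * partialX y τ x = 0)
    (m0 δ x1 ρ : ℝ) (hδ : 0 < δ) (hρ : 0 < ρ) (hρ1 : ρ ≤ 1)
    (hglob : ∀ τ x, 0 ≤ τ → y τ x ≤ m0)
    (hnear : ∀ x, |x - x1| ≤ ρ → y 0 x ≤ m0 - δ) :
    ∃ h > 0, ∀ τ', 0 < τ' → τ' ≤ h → ∀ x, y τ' x < m0 := by
  have hM : 0 ≤ M := le_trans (abs_nonneg _) (haM 0 0 le_rfl)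
  obtain ⟨L0, hL0⟩ : ∃ L0:ℝ, L0 = Real.log ((1+ρ^2)/ρ^2) := ⟨_, rfl⟩
  have hL0nn : 0 ≤ L0 := by
    rw [hL0]
    apply Real.log_nonneg
    rw [le_div_iff₀ (by positivity)]
    nlinarith
  obtain ⟨D, hD⟩ : ∃ D:ℝ, D = L0/2 + 1/(2*ρ^2) + M^2/2 + 1 := ⟨_, rfl⟩
  have hDpos : 0 < D := by
    have h1 : 0 < 1/(2*ρ^2) := by positivity
    nlinarith [sq_nonneg M]
  refine ⟨min 1 (3/(8*D)), lt_min (by norm_num) (div_pos (by norm_num) (by linarith)), ?_⟩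
  intro τ' hτ' hτ'h
  have hτ'1 : τ' ≤ 1 := le_trans hτ'h (min_le_left _ _)
  have hτ'D : τ' ≤ 3/(8*D) := le_trans hτ'h (min_le_right _ _)
  obtain ⟨s, hs_def⟩ : ∃ s:ℝ, s = ρ^2 * τ' := ⟨_, rfl⟩
  have hs : 0 < s := by rw [hs_def]; positivity
  obtain ⟨K, hK⟩ : ∃ K:ℝ, K = 1/(2*s) + M^2/2 := ⟨_, rfl⟩
  have hKpos : 0 < K := by
    have h1 : 0 < 1/(2*s) := one_div_pos.2 (by linarith)
    nlinarith [sq_nonneg M]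
  obtain ⟨εb, hεb⟩ : ∃ e:ℝ, e = Real.exp (-(ρ^2/(2*s))) := ⟨_, rfl⟩
  have hεbpos : 0 < εb := by rw [hεb]; exact Real.exp_pos _
  set z : ℝ → ℝ → ℝ := fun τ x => y τ x - m0 + δ*(barF s K x1 τ x - εb) with hz
  -- apply the rectangle maximum principle
  have hconc : ∀ τ ∈ Icc 0 τ', ∀ x ∈ Icc (x1-2) (x1+2), z τ x ≤ 0 := by
    apply rect_mp a z τ' (x1-2) (x1+2) hτ' (by linarith)
    · -- continuity
      apply ContinuousOn.add
      · apply ContinuousOn.sub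
        · exact hyc.mono (fun p hp => ⟨hp.1.1, mem_univ _⟩)
        · exact continuousOn_const
      · apply ContinuousOn.mul continuousOn_const
        apply ContinuousOn.sub _ continuousOn_const
        exact (barF_contOn s K x1 hs).mono (fun p hp => ⟨hp.1.1, mem_univ _⟩)
    · -- derivatives
      intro τ hτ0 hττ'
      have htpos : 0 < τ + s := by linarith
      refine ⟨fun x => partialX y τ x + δ * (-((x - x1)/(τ+s)) * barF s K x1 τ x), ?_, ?_⟩
      · intro x
        exact (((hyx τ x hτ0).hasDerivAt).sub_const m0).add
          (((barF_hasDerivAt_x s K x1 τ x).sub_const εb).const_mul δ)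
      · intro x
        refine ⟨partialT y τ x + δ * ((-(1/(2*(τ+s))) + (x-x1)^2/(2*(τ+s)^2) - K) * barF s K x1 τ x),
          partialXX y τ x + δ * (((x-x1)^2/(τ+s)^2 - 1/(τ+s)) * barF s K x1 τ x), ?_, ?_, ?_⟩
        · exact (((hyt τ x hτ0).hasDerivAt).sub_const m0).add
            (((barF_hasDerivAt_t s K x1 τ x htpos).sub_const εb).const_mul δ)
        · exact ((hyxx τ x hτ0).hasDerivAt).add
            ((barX_hasDerivAt s K x1 τ x htpos).const_mul δ)
        · have heq := hyeq τ x hτ0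
          have hsub := bar_subsol M s x1 hs τ x (a τ x) hτ0.le (haM τ x hτ0.le)
          rw [← hK] at hsub
          have hδsub := mul_nonpos_of_nonneg_of_nonpos hδ.le hsub
          nlinarith [hδsub, heq]
    · -- initial condition
      intro x hx
      have hbF0 : barF s K x1 0 x = Real.exp (-((x-x1)^2/(2*s))) := by
        unfold barF barE
        norm_num
      show y 0 x - m0 + δ*(barF s K x1 0 x - εb) ≤ 0
      rw [hbF0]
      by_cases hcase : |x - x1| ≤ ρ
      · have h1 := hnear x hcase
        have h2 : Real.exp (-((x-x1)^2/(2*s))) ≤ 1 := by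
          apply Real.exp_le_one_iff.2
          have : 0 ≤ (x-x1)^2/(2*s) := div_nonneg (sq_nonneg _) (by linarith)
          linarith
        have h3 := mul_le_mul_of_nonneg_left h2 hδ.le
        have h4 := mul_nonneg hδ.le hεbpos.le
        nlinarith [h3, h4]
      · push_neg at hcase
        have h1 := hglob 0 x le_rfl
        have h2 : Real.exp (-((x-x1)^2/(2*s))) ≤ εb := by
          rw [hεb]
          apply Real.exp_le_exp.2
          have hsq : ρ^2 ≤ (x-x1)^2 := by
            have := abs_nonneg (x - x1)
            nlinarith [sq_abs (x-x1)]
          have hdd : ρ^2/(2*s) ≤ (x-x1)^2/(2*s) :=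
            div_le_div_of_nonneg_right hsq (by linarith)
          linarith
        have h3 := mul_nonpos_of_nonneg_of_nonpos hδ.le (sub_nonpos.2 h2)
        linarith
    · -- lateral condition
      intro τ hτ
      have hbar_le : ∀ x, (x - x1)^2 = 4 → barF s K x1 τ x ≤ εb := by
        intro x hx4
        rw [hεb]
        unfold barF
        apply Real.exp_le_exp.2
        unfold barE
        rw [hx4]
        have hlog : Real.log s ≤ Real.log (τ + s) := by
          apply Real.log_le_log hs
          linarith [hτ.1]
        have hKτ : 0 ≤ K*τ := mul_nonneg hKpos.le hτ.1
        have hdiv : ρ^2/(2*s) ≤ 4/(2*(τ+s)) := by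
          rw [div_le_div_iff₀ (by linarith) (by linarith [hτ.1])]
          rw [hs_def]
          have h1m : (0:ℝ) ≤ 1 - ρ^2 := by nlinarith
          nlinarith [mul_le_mul_of_nonneg_left hτ.2 (sq_nonneg ρ),
            mul_nonneg (mul_nonneg (sq_nonneg ρ) hτ'.le) h1m, sq_nonneg ρ, hτ'.le]
        linarith
      constructor
      · have h1 := hglob τ (x1-2) hτ.1
        have h2 := hbar_le (x1-2) (by ring)
        show y τ (x1-2) - m0 + δ*(barF s K x1 τ (x1-2) - εb) ≤ 0
        nlinarith [hδ]
      · have h1 := hglob τ (x1+2) hτ.1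
        have h2 := hbar_le (x1+2) (by ring)
        show y τ (x1+2) - m0 + δ*(barF s K x1 τ (x1+2) - εb) ≤ 0
        nlinarith [hδ]
  -- positivity of the barrier at time τ' on the central window
  have hpos : ∀ x ∈ Icc (x1 - 1/2) (x1 + 1/2), εb < barF s K x1 τ' x := by
    intro x hx
    rw [hεb]
    unfold barF
    apply Real.exp_lt_exp.2
    unfold barE
    have htpos : 0 < τ' + s := by linarith
    have he4 : ρ^2/(2*s) = 1/(2*τ') := by
      rw [hs_def]; rw [div_eq_div_iff (by positivity) (by positivity)]; ring
    have he1 : Real.log (τ'+s) - Real.log s = L0 := by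
      rw [hL0, ← Real.log_div (ne_of_gt htpos) (ne_of_gt hs)]
      congr 1
      rw [hs_def]; field_simp
    have he2 : K*τ' = 1/(2*ρ^2) + M^2*τ'/2 := by
      rw [hK, hs_def]; field_simp
    have he3 : (x-x1)^2/(2*(τ'+s)) ≤ 1/(8*τ') := by
      have hr2 : (x-x1)^2 ≤ 1/4 := by
        have h1 : -(1/2) ≤ x - x1 := by linarith [hx.1]
        have h2 : x - x1 ≤ 1/2 := by linarith [hx.2]
        nlinarith
      have ha1 : (x-x1)^2/(2*(τ'+s)) ≤ (1/4)/(2*(τ'+s)) :=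
        div_le_div_of_nonneg_right hr2 (by positivity)
      have ha2 : (1/4:ℝ)/(2*(τ'+s)) ≤ (1/4)/(2*τ') := by
        apply div_le_div_of_nonneg_left (by norm_num) (by positivity) (by linarith)
      have ha3 : (1/4:ℝ)/(2*τ') = 1/(8*τ') := by field_simp; ring
      linarith
    have he5 : D ≤ 3/(8*τ') := by
      rw [le_div_iff₀ (by positivity)]
      have h8 : 0 < 8*D := by positivity
      rw [le_div_iff₀ h8] at hτ'D
      nlinarith
    have he6 : M^2*τ'/2 ≤ M^2/2 := by nlinarith
    have hgoal : -(1/(2*τ')) < -(L0/2) - 1/(8*τ') - (1/(2*ρ^2) + M^2*τ'/2) := by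
      have : L0/2 + 1/(2*ρ^2) + M^2*τ'/2 ≤ D - 1 := by
        rw [hD]; linarith
      have h38 : 3/(8*τ') = 1/(2*τ') - 1/(8*τ') := by field_simp; ring
      linarith
    have hEsplit : (Real.log s - Real.log (τ' + s))/2 = -(L0/2) + 0 := by
      rw [← he1]; ring
    linarith [he1, he2, he3, he4, hgoal, hEsplit]
  -- conclude pointwise strict bound
  intro x
  obtain ⟨x', hx'mem, hx'eq⟩ := per_reduce (hyper τ') (x1 - 1/2) x
  have hx'w : x' ∈ Icc (x1 - 1/2) (x1 + 1/2) := by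
    refine ⟨hx'mem.1, ?_⟩
    have := hx'mem.2
    linarith
  have hx'rect : x' ∈ Icc (x1-2) (x1+2) := by
    constructor <;> [linarith [hx'w.1]; linarith [hx'w.2]]
  have h1 : z τ' x' ≤ 0 := hconc τ' ⟨hτ'.le, le_rfl⟩ x' hx'rect
  have h2 := hpos x' hx'w
  have h3 : y τ' x' - m0 + δ*(barF s K x1 τ' x' - εb) ≤ 0 := h1
  have h4 : 0 < δ*(barF s K x1 τ' x' - εb) := mul_pos hδ (by linarith)
  rw [← hx'eq]
  linarith


lemma slice_cont (y : ℝ → ℝ → ℝ)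
    (hyc : ContinuousOn (Function.uncurry y) (Ici 0 ×ˢ univ))
    (τ : ℝ) (hτ : 0 ≤ τ) : Continuous (y τ) := by
  rw [← continuousOn_univ]
  have h := hyc.comp ((continuous_const.prodMk continuous_id).continuousOn
    (s := (univ : Set ℝ)))
    (fun x _ => (⟨hτ, mem_univ _⟩ : ((τ:ℝ), x) ∈ Ici (0:ℝ) ×ˢ (univ : Set ℝ)))
  exact h

lemma key (M : ℝ) (a y : ℝ → ℝ → ℝ)
    (haM : ∀ τ x : ℝ, 0 ≤ τ → |a τ x| ≤ M)
    (hyc : ContinuousOn (Function.uncurry y) (Ici 0 ×ˢ univ))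
    (hyt : ∀ τ x : ℝ, 0 < τ → DifferentiableAt ℝ (fun σ => y σ x) τ)
    (hyx : ∀ τ x : ℝ, 0 < τ → DifferentiableAt ℝ (y τ) x)
    (hyxx : ∀ τ x : ℝ, 0 < τ → DifferentiableAt ℝ (partialX y τ) x)
    (hyper : ∀ τ x : ℝ, y τ (x + 1) = y τ x)
    (hyeq : ∀ τ x : ℝ, 0 < τ →
      partialT y τ x - partialXX y τ x - a τ x * partialX y τ x = 0)
    (m0 : ℝ) (hbd : ∀ x, y 0 x ≤ m0) (hex : ∃ x1, y 0 x1 < m0) :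
    ∀ τ, 0 < τ → ∀ x, y τ x < m0 := by
  have hglob : ∀ τ x, 0 ≤ τ → y τ x ≤ m0 := by
    intro τ x hτ
    rcases eq_or_lt_of_le hτ with h | h
    · rw [← h]; exact hbd x
    · exact per_bound_step a y hyc hyt hyx hyxx hyper hyeq 0 τ m0 le_rfl h hbd
        τ ⟨hτ, le_rfl⟩ x
  obtain ⟨x1, hx1⟩ := hex
  obtain ⟨δ, hδdef⟩ : ∃ δ:ℝ, δ = (m0 - y 0 x1)/2 := ⟨_, rfl⟩
  have hδ : 0 < δ := by rw [hδdef]; linarith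
  have hy0c : Continuous (y 0) := slice_cont y hyc 0 le_rfl
  obtain ⟨ε, hε, hcont⟩ := Metric.continuousAt_iff.1 (hy0c.continuousAt (x := x1)) δ hδ
  obtain ⟨ρ, hρdef⟩ : ∃ ρ:ℝ, ρ = min (ε/2) 1 := ⟨_, rfl⟩
  have hρ : 0 < ρ := by rw [hρdef]; exact lt_min (by linarith) one_pos
  have hρ1 : ρ ≤ 1 := by rw [hρdef]; exact min_le_right _ _
  have hρε : ρ < ε := by
    rw [hρdef]
    calc min (ε/2) 1 ≤ ε/2 := min_le_left _ _
    _ < ε := by linarith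
  have hnear : ∀ x, |x - x1| ≤ ρ → y 0 x ≤ m0 - δ := by
    intro x hx
    have hd : dist x x1 < ε := by
      rw [Real.dist_eq]
      linarith
    have := hcont hd
    rw [Real.dist_eq] at this
    have h2 : y 0 x - y 0 x1 < δ := lt_of_le_of_lt (le_abs_self _) this
    rw [hδdef] at h2 ⊢
    linarith
  obtain ⟨h, hh, hstep⟩ := barrier_step M a y haM hyc hyt hyx hyxx hyper hyeq
    m0 δ x1 ρ hδ hρ hρ1 hglob hnear
  intro τ hτ x
  by_cases hcase : τ ≤ h
  · exact hstep τ hτ hcase x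
  push_neg at hcase
  -- max of y h over [0,1]
  have hyhc : Continuous (y h) := slice_cont y hyc h hh.le
  obtain ⟨xm, hxm, hmax⟩ := isCompact_Icc.exists_isMaxOn (α := ℝ)
    (s := Icc (0:ℝ) 1) ⟨0, by norm_num⟩ (hyhc.continuousOn)
  rw [isMaxOn_iff] at hmax
  have hbdh : ∀ x', y h x' ≤ y h xm := by
    intro x'
    obtain ⟨x'', hx''mem, hx''eq⟩ := per_reduce (hyper h) 0 x'
    rw [zero_add] at hx''mem
    rw [← hx''eq]
    exact hmax x'' hx''mem
  have hc : y h xm < m0 := hstep h hh le_rfl xm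
  have := per_bound_step a y hyc hyt hyx hyxx hyper hyeq h τ (y h xm) hh.le hcase
    hbdh τ ⟨hcase.le, le_rfl⟩ x
  linarith


/-- Strict decrease of the sup-norm for the space-periodic linear drift–diffusion
equation `∂_τ y − ∂ₓₓ y − a ∂ₓ y = 0` when the initial profile is not constant
(strong maximum principle and the Hopf boundary point lemma). -/
theorem periodic_drift_diffusion_strong_maximum_principle
    (M : ℝ) (hM : 0 < M) (a y : ℝ → ℝ → ℝ)
    (hac : ContinuousOn (Function.uncurry a) (Ici 0 ×ˢ univ))
    (haper : ∀ τ x : ℝ, a τ (x + 1) = a τ x)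
    (haM : ∀ τ x : ℝ, 0 ≤ τ → |a τ x| ≤ M)
    (hyc : ContinuousOn (Function.uncurry y) (Ici 0 ×ˢ univ))
    (hyt : ∀ τ x : ℝ, 0 < τ → DifferentiableAt ℝ (fun σ => y σ x) τ)
    (hyx : ∀ τ x : ℝ, 0 < τ → DifferentiableAt ℝ (y τ) x)
    (hyxx : ∀ τ x : ℝ, 0 < τ → DifferentiableAt ℝ (partialX y τ) x)
    (hytc : ContinuousOn (fun p : ℝ × ℝ => partialT y p.1 p.2) (Ioi 0 ×ˢ univ))
    (hyxc : ContinuousOn (fun p : ℝ × ℝ => partialX y p.1 p.2) (Ioi 0 ×ˢ univ))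
    (hyxxc : ContinuousOn (fun p : ℝ × ℝ => partialXX y p.1 p.2) (Ioi 0 ×ˢ univ))
    (hyper : ∀ τ x : ℝ, y τ (x + 1) = y τ x)
    (hyeq : ∀ τ x : ℝ, 0 < τ →
      partialT y τ x - partialXX y τ x - a τ x * partialX y τ x = 0)
    (hnc : ¬ ∃ c : ℝ, ∀ x : ℝ, y 0 x = c) :
    ∀ τ : ℝ, 0 < τ →
      sSup ((fun z => |y τ z|) '' Icc (0:ℝ) 1)
        < sSup ((fun z => |y 0 z|) '' Icc (0:ℝ) 1) := by
  -- the sup at time 0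
  have habs : ∀ τ, 0 ≤ τ → ∃ xm ∈ Icc (0:ℝ) 1,
      (∀ x ∈ Icc (0:ℝ) 1, |y τ x| ≤ |y τ xm|) ∧
      sSup ((fun z => |y τ z|) '' Icc (0:ℝ) 1) = |y τ xm| := by
    intro τ hτ
    have hc : Continuous (fun x => |y τ x|) := (slice_cont y hyc τ hτ).abs
    obtain ⟨xm, hxm, hmax⟩ := isCompact_Icc.exists_isMaxOn (α := ℝ)
      (s := Icc (0:ℝ) 1) ⟨0, by norm_num⟩ hc.continuousOn
    rw [isMaxOn_iff] at hmax
    refine ⟨xm, hxm, hmax, ?_⟩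
    apply IsGreatest.csSup_eq
    constructor
    · exact mem_image_of_mem _ hxm
    · rintro b ⟨x, hx, rfl⟩
      exact hmax x hx
  obtain ⟨x0, hx0mem, hx0max, hx0sup⟩ := habs 0 le_rfl
  obtain ⟨m0, hm0⟩ : ∃ m0:ℝ, m0 = |y 0 x0| := ⟨_, rfl⟩
  -- global bound at time 0
  have hbd0 : ∀ x, |y 0 x| ≤ m0 := by
    intro x
    obtain ⟨x', hx'mem, hx'eq⟩ := per_reduce (f := fun x => |y 0 x|)
      (fun x => by simp [hyper 0 x]) 0 x
    rw [zero_add] at hx'mem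
    rw [hm0, ← hx'eq]
    exact hx0max x' hx'mem
  have hbdp : ∀ x, y 0 x ≤ m0 := fun x => le_trans (le_abs_self _) (hbd0 x)
  have hbdn : ∀ x, -y 0 x ≤ m0 := fun x => le_trans (neg_le_abs _) (hbd0 x)
  -- non-constancy gives strict points
  have hexp : ∃ x1, y 0 x1 < m0 := by
    by_contra hcon
    push_neg at hcon
    exact hnc ⟨m0, fun x => le_antisymm (hbdp x) (hcon x)⟩
  have hexn : ∃ x1, -y 0 x1 < m0 := by
    by_contra hcon
    push_neg at hcon
    refine hnc ⟨-m0, fun x => ?_⟩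
    have h1 := hbdn x
    have h2 := hcon x
    linarith
  -- apply the key lemma to y and -y
  have hkp := key M a y haM hyc hyt hyx hyxx hyper hyeq m0 hbdp hexp
  have hkn : ∀ τ, 0 < τ → ∀ x, -y τ x < m0 := by
    have hyxn : ∀ τ x : ℝ, 0 < τ → DifferentiableAt ℝ ((fun τ x => -y τ x) τ) x :=
      fun τ x hτ => (hyx τ x hτ).neg
    have hpxn : ∀ τ, partialX (fun τ x => -y τ x) τ = fun x => -partialX y τ x := by
      intro τ
      funext x
      exact deriv.neg
    apply key M a (fun τ x => -y τ x) haM (hyc.neg) ?_ hyxn ?_ ?_ ?_ m0 hbdn hexn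
    · intro τ x hτ
      exact (hyt τ x hτ).neg
    · intro τ x hτ
      rw [hpxn τ]
      exact (hyxx τ x hτ).neg
    · intro τ x
      simp [hyper τ x]
    · intro τ x hτ
      have heq := hyeq τ x hτ
      have e1 : partialT (fun τ x => -y τ x) τ x = -partialT y τ x := deriv.neg
      have e2 : partialX (fun τ x => -y τ x) τ x = -partialX y τ x := deriv.neg
      have e3 : partialXX (fun τ x => -y τ x) τ x = -partialXX y τ x := by
        show deriv (partialX (fun τ x => -y τ x) τ) x = _
        rw [hpxn τ]
        exact deriv.neg
      rw [e1, e2, e3]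
      linarith
  -- conclude
  intro τ hτ
  obtain ⟨xτ, hxτmem, hxτmax, hxτsup⟩ := habs τ hτ.le
  rw [hxτsup, hx0sup, ← hm0]
  have h1 := hkp τ hτ xτ
  have h2 := hkn τ hτ xτ
  rw [abs_lt]
  constructor <;> linarith
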